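/- Let K be a number field (a subfield of ℚ̄ which is finite over ℚ) and let 𝔣 ∈ ℕ be such that K ∩ E_m ⊆ E_𝔣 for every m ∈ ℕ (for instance, the conductor of the maximal abelian subfield of K, which exists by the Kronecker–Weber theorem). Then for every ∘ ∈ {+, −, (none)} and every n ∈ ℕ, c_K^∘(n) = c_K^∘(gcd(n, 𝔣)). -/

import Mathlib

noncomputable section

/-- The primitive `n`-th root of unity `exp(2πi/n)` in `ℂ`. -/
def zetaC (n : ℕ) : ℂ := Complex.exp (2 * Real.pi * Complex.I / n)

/-- The `n`-th cyclotomic field `E_n = ℚ(ζ_n)`, as an intermediate field of `ℂ/ℚ`. -/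
def Ecyc (n : ℕ) : IntermediateField ℚ ℂ := IntermediateField.adjoin ℚ {zetaC n}

/-- Writing `n = 2^j * m` with `m` odd, `E_n^+ = ℚ(ζ_{2^j} + ζ_{2^j}⁻¹)·E_m` if `j ≥ 3`,
and `E_n^+ = E_m` if `j ≤ 2`. -/
def EcycP (n : ℕ) : IntermediateField ℚ ℂ :=
  if 3 ≤ n.factorization 2 then
    IntermediateField.adjoin ℚ
        {zetaC (2 ^ n.factorization 2) + (zetaC (2 ^ n.factorization 2))⁻¹} ⊔
      Ecyc (n / 2 ^ n.factorization 2)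
  else Ecyc (n / 2 ^ n.factorization 2)

/-- Writing `n = 2^j * m` with `m` odd, `E_n^- = ℚ(ζ_{2^j} - ζ_{2^j}⁻¹)·E_m` if `j ≥ 3`,
and `E_n^- = E_m` if `j ≤ 2`. -/
def EcycM (n : ℕ) : IntermediateField ℚ ℂ :=
  if 3 ≤ n.factorization 2 then
    IntermediateField.adjoin ℚ
        {zetaC (2 ^ n.factorization 2) - (zetaC (2 ^ n.factorization 2))⁻¹} ⊔
      Ecyc (n / 2 ^ n.factorization 2)
  else Ecyc (n / 2 ^ n.factorization 2)

/-- The gcd of a set of natural numbers (`0` if the set is empty), realised as the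
largest common divisor. -/
def setGcd (S : Set ℕ) : ℕ := sSup {g : ℕ | ∀ s ∈ S, g ∣ s}

/-- `𝔇_K(n) = {d ∈ ℕ : K ∩ E_n ⊆ E_d}` (with `d` positive). -/
def Dset (K : IntermediateField ℚ ℂ) (n : ℕ) : Set ℕ :=
  {d | 0 < d ∧ K ⊓ Ecyc n ≤ Ecyc d}

/-- `𝔇_K^+(n) = {d ∈ ℕ : K ∩ E_n ⊆ E_d^+}` (with `d` positive). -/
def DsetP (K : IntermediateField ℚ ℂ) (n : ℕ) : Set ℕ :=
  {d | 0 < d ∧ K ⊓ Ecyc n ≤ EcycP d}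

/-- `𝔇_K^-(n) = {d ∈ ℕ : K ∩ E_n ⊆ E_d^-}` (with `d` positive). -/
def DsetM (K : IntermediateField ℚ ℂ) (n : ℕ) : Set ℕ :=
  {d | 0 < d ∧ K ⊓ Ecyc n ≤ EcycM d}

/-- `c_K(n) = gcd 𝔇_K(n)`. -/
def cK (K : IntermediateField ℚ ℂ) (n : ℕ) : ℕ := setGcd (Dset K n)

/-- `c_K^+(n) = gcd 𝔇_K^+(n)`. -/
def cKP (K : IntermediateField ℚ ℂ) (n : ℕ) : ℕ := setGcd (DsetP K n)

/-- `c_K^-(n) = gcd 𝔇_K^-(n)`. -/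
def cKM (K : IntermediateField ℚ ℂ) (n : ℕ) : ℕ := setGcd (DsetM K n)

/-- The compositum `F·A`, viewed as a field extension of `A`. -/
def relField (F A : IntermediateField ℚ ℂ) : IntermediateField ↥A ℂ :=
  IntermediateField.extendScalars (le_sup_right : A ≤ F ⊔ A)

/-- The relative degree `[F·A : A]`. -/
def relDeg (F A : IntermediateField ℚ ℂ) : ℕ := Module.finrank ↥A ↥(relField F A)

/-- The Galois group `Gal(F·A / A)`. -/
abbrev RelGal (F A : IntermediateField ℚ ℂ) :=
  ↥(relField F A) ≃ₐ[↥A] ↥(relField F A)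

end

noncomputable section

lemma zetaC_mem (n : ℕ) : zetaC n ∈ Ecyc n := IntermediateField.subset_adjoin ℚ _ rfl

lemma zetaC_isPrimitiveRoot {n : ℕ} (hn : 0 < n) : IsPrimitiveRoot (zetaC n) n := by
  exact Complex.isPrimitiveRoot_exp n hn.ne'

lemma Ecyc_le_of_dvd {d n : ℕ} (hd : 0 < d) (hn : 0 < n) (h : d ∣ n) : Ecyc d ≤ Ecyc n := by
  rw [Ecyc, IntermediateField.adjoin_le_iff, Set.singleton_subset_iff]
  have hkey : zetaC d = zetaC n ^ (n / d) := by
    unfold zetaC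
    rw [← Complex.exp_nat_mul]
    congr 1
    have hcast : ((n / d : ℕ) : ℂ) = (n : ℂ) / (d : ℂ) := by
      rw [Nat.cast_div h (by exact_mod_cast hd.ne')]
    rw [hcast]
    have h1 : (n : ℂ) ≠ 0 := by exact_mod_cast hn.ne'
    have h2 : (d : ℂ) ≠ 0 := by exact_mod_cast hd.ne'
    field_simp
  rw [hkey]
  exact pow_mem (zetaC_mem n) _

lemma Ecyc_finiteDimensional {n : ℕ} (hn : 0 < n) : FiniteDimensional ℚ (Ecyc n) := by
  apply IntermediateField.adjoin.finiteDimensional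
  exact ((zetaC_isPrimitiveRoot hn).isIntegral hn).tower_top

lemma Ecyc_finrank {n : ℕ} (hn : 0 < n) : Module.finrank ℚ (Ecyc n) = n.totient := by
  have hp := zetaC_isPrimitiveRoot hn
  have hint : IsIntegral ℚ (zetaC n) := (hp.isIntegral hn).tower_top
  have hsub : (Ecyc n).toSubalgebra = Algebra.adjoin ℚ {zetaC n} :=
    IntermediateField.adjoin_simple_toSubalgebra_of_isAlgebraic hint.isAlgebraic
  lift n to ℕ+ using hn
  haveI := hp.adjoin_isCyclotomicExtension ℚ
  have hfin := IsCyclotomicExtension.finrank (n := n) (K := ℚ)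
    (Algebra.adjoin ℚ {zetaC n}) (Polynomial.cyclotomic.irreducible_rat n.pos)
  have : Module.finrank ℚ (Ecyc n) = Module.finrank ℚ (Algebra.adjoin ℚ ({zetaC n} : Set ℂ)) := by
    rw [← hsub]; rfl
  rw [this, hfin]

lemma Ecyc_sup {n f : ℕ} (hn : 0 < n) (hf : 0 < f) :
    Ecyc n ⊔ Ecyc f = Ecyc (Nat.lcm n f) := by
  have hL : 0 < Nat.lcm n f := Nat.pos_of_ne_zero (Nat.lcm_ne_zero hn.ne' hf.ne')
  apply le_antisymm
  · exact sup_le (Ecyc_le_of_dvd hn hL (Nat.dvd_lcm_left n f))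
      (Ecyc_le_of_dvd hf hL (Nat.dvd_lcm_right n f))
  · rw [Ecyc, IntermediateField.adjoin_le_iff, Set.singleton_subset_iff]
    have hg : 0 < Nat.gcd n f := Nat.gcd_pos_of_pos_left f hn
    have hbez : (Nat.gcd n f : ℤ) = n * Nat.gcdA n f + f * Nat.gcdB n f :=
      Nat.gcd_eq_gcd_ab n f
    have hnc : (n : ℂ) ≠ 0 := by exact_mod_cast hn.ne'
    have hfc : (f : ℂ) ≠ 0 := by exact_mod_cast hf.ne'
    have hLc : ((Nat.lcm n f : ℕ) : ℂ) ≠ 0 := by exact_mod_cast hL.ne'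
    have hml : ((Nat.gcd n f : ℕ) : ℂ) * ((Nat.lcm n f : ℕ) : ℂ) = (n : ℂ) * f := by
      exact_mod_cast congrArg (Nat.cast : ℕ → ℂ) (Nat.gcd_mul_lcm n f)
    have hkey : zetaC (Nat.lcm n f) = zetaC n ^ (Nat.gcdB n f) * zetaC f ^ (Nat.gcdA n f) := by
      unfold zetaC
      rw [← Complex.exp_int_mul, ← Complex.exp_int_mul, ← Complex.exp_add]
      congr 1
      have : ((Nat.gcd n f : ℤ) : ℂ) = (n : ℂ) * (Nat.gcdA n f : ℂ) + (f : ℂ) * (Nat.gcdB n f : ℂ) := by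
        exact_mod_cast congrArg (Int.cast : ℤ → ℂ) hbez
      field_simp
      push_cast at this ⊢
      linear_combination (Nat.lcm n f : ℂ) * this - hml
    rw [hkey]
    exact mul_mem
      (zpow_mem (le_sup_left (a := Ecyc n) (b := Ecyc f) (zetaC_mem n)) _)
      (zpow_mem (le_sup_right (a := Ecyc n) (b := Ecyc f) (zetaC_mem f)) _)

lemma finrank_tower_es {D E : IntermediateField ℚ ℂ} (h : D ≤ E) :
    Module.finrank ℚ D * Module.finrank ↥D ↥(IntermediateField.extendScalars h) =
      Module.finrank ℚ E := by
  set_option synthInstance.maxHeartbeats 400000 in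
  have := Module.finrank_mul_finrank ℚ ↥D ↥(IntermediateField.extendScalars h)
  rw [this]
  rfl

lemma finiteDimensional_of_le {D E : IntermediateField ℚ ℂ} (h : D ≤ E)
    [FiniteDimensional ℚ E] : FiniteDimensional ℚ D :=
  FiniteDimensional.of_injective (IntermediateField.inclusion h).toLinearMap
    (IntermediateField.inclusion h).injective

lemma totient_gcd_lcm {n f : ℕ} (hn : 0 < n) (hf : 0 < f) :
    (n.gcd f).totient * (n.lcm f).totient = n.totient * f.totient := by
  have hg : 0 < n.gcd f := Nat.gcd_pos_of_pos_left f hn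
  have hgL : n.gcd f ∣ n.lcm f := (Nat.gcd_dvd_left n f).trans (Nat.dvd_lcm_left n f)
  have e1 := Nat.totient_gcd_mul_totient_mul n f
  have e2 := Nat.totient_gcd_mul_totient_mul (n.gcd f) (n.lcm f)
  rw [Nat.gcd_eq_left hgL, Nat.gcd_mul_lcm] at e2
  exact Nat.eq_of_mul_eq_mul_right hg (e2.symm.trans e1)

lemma Ecyc_inf_le {n f : ℕ} (hn : 0 < n) (hf : 0 < f) :
    Ecyc n ⊓ Ecyc f ≤ Ecyc (Nat.gcd n f) := by
  set g := Nat.gcd n f with hgdef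
  set L := Nat.lcm n f with hLdef
  have hg : 0 < g := Nat.gcd_pos_of_pos_left f hn
  have hL : 0 < L := Nat.pos_of_ne_zero (Nat.lcm_ne_zero hn.ne' hf.ne')
  haveI := Ecyc_finiteDimensional hn
  haveI := Ecyc_finiteDimensional hf
  haveI := Ecyc_finiteDimensional hg
  haveI := Ecyc_finiteDimensional hL
  set D := Ecyc n ⊓ Ecyc f with hDdef
  have hgD : Ecyc g ≤ D :=
    le_inf (Ecyc_le_of_dvd hg hn (Nat.gcd_dvd_left n f))
      (Ecyc_le_of_dvd hg hf (Nat.gcd_dvd_right n f))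
  haveI : FiniteDimensional ℚ D := finiteDimensional_of_le inf_le_left
  -- degree bookkeeping
  have hDn : D ≤ Ecyc n := inf_le_left
  have hDf : D ≤ Ecyc f := inf_le_right
  have hDs : D ≤ Ecyc n ⊔ Ecyc f := hDn.trans le_sup_left
  have hsup := IntermediateField.extendScalars_sup hDn hDf
  have hfr : Module.finrank ↥D ↥(IntermediateField.extendScalars hDs) ≤
      Module.finrank ↥D ↥(IntermediateField.extendScalars hDn) *
        Module.finrank ↥D ↥(IntermediateField.extendScalars hDf) := by
    rw [← hsup]
    exact IntermediateField.finrank_sup_le _ _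
  set d := Module.finrank ℚ ↥D with hd
  have h1 := finrank_tower_es hDn
  have h2 := finrank_tower_es hDf
  have h3 := finrank_tower_es hDs
  rw [Ecyc_finrank hn] at h1
  rw [Ecyc_finrank hf] at h2
  have h3' : Module.finrank ℚ ↥(Ecyc n ⊔ Ecyc f) = L.totient := by
    rw [Ecyc_sup hn hf, Ecyc_finrank hL]
  rw [h3'] at h3
  -- totient identity : g.totient * L.totient = n.totient * f.totient
  have htot : g.totient * L.totient = n.totient * f.totient := totient_gcd_lcm hn hf
  -- main inequality : d ≤ g.totient
  have hmain : d ≤ g.totient := by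
    have hineq : d * L.totient ≤ n.totient * f.totient := by
      calc d * L.totient = d * (d * Module.finrank ↥D ↥(IntermediateField.extendScalars hDs)) := by
            rw [h3]
        _ ≤ d * (d * (Module.finrank ↥D ↥(IntermediateField.extendScalars hDn) *
              Module.finrank ↥D ↥(IntermediateField.extendScalars hDf))) := by
            exact Nat.mul_le_mul_left _ (Nat.mul_le_mul_left _ hfr)
        _ = (d * Module.finrank ↥D ↥(IntermediateField.extendScalars hDn)) *
              (d * Module.finrank ↥D ↥(IntermediateField.extendScalars hDf)) := by ring
        _ = n.totient * f.totient := by rw [h1, h2]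
    rw [← htot] at hineq
    exact Nat.le_of_mul_le_mul_right hineq (Nat.totient_pos.2 hL)
  have := IntermediateField.eq_of_le_of_finrank_le hgD (by rw [Ecyc_finrank hg]; exact hmain)
  rw [← this]

end

/-- Let `K` be a number field and `𝔣 ∈ ℕ` with `K ∩ E_m ⊆ E_𝔣` for every
`m ∈ ℕ`. Then for every `∘ ∈ {+, −, (none)}` and every `n ∈ ℕ`,
`c_K^∘(n) = c_K^∘(gcd(n, 𝔣))`. -/
theorem stmt_6 (K : IntermediateField ℚ ℂ) [FiniteDimensional ℚ ↥K]
    (f : ℕ) (hf : 0 < f) (hcond : ∀ m : ℕ, 0 < m → K ⊓ Ecyc m ≤ Ecyc f) :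
    ∀ n : ℕ, 0 < n →
      cK K n = cK K (n.gcd f) ∧ cKP K n = cKP K (n.gcd f) ∧ cKM K n = cKM K (n.gcd f) := by
  intro n hn
  have hg : 0 < n.gcd f := Nat.gcd_pos_of_pos_left f hn
  have key : K ⊓ Ecyc n = K ⊓ Ecyc (n.gcd f) := by
    apply le_antisymm
    · exact le_inf inf_le_left
        (le_trans (le_inf inf_le_right (hcond n hn)) (Ecyc_inf_le hn hf))
    · exact inf_le_inf_left K (Ecyc_le_of_dvd hg hn (Nat.gcd_dvd_left n f))
  refine ⟨?_, ?_, ?_⟩ <;> simp only [cK, cKP, cKM, Dset, DsetP, DsetM, key]
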